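/- Every closed term over the signature {1, +, ·, ⁻¹} is provably equal, in the equational theory of inversive arithmetical meadows, to a term of the form n̲ · m̲⁻¹ with n, m positive natural numbers and gcd(n,m) = 1. -/
import Mathlib

structure IAMeadow (M : Type*) where
  add : M → M → M
  mul : M → M → M
  one : M
  inv : M → M
  add_assoc : ∀ x y z, add (add x y) z = add x (add y z)
  add_comm : ∀ x y, add x y = add y x
  mul_assoc : ∀ x y z, mul (mul x y) z = mul x (mul y z)
  mul_comm : ∀ x y, mul x y = mul y x
  mul_one : ∀ x, mul x one = x
  mul_add : ∀ x y z, mul x (add y z) = add (mul x y) (mul x z)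
  mul_inv : ∀ x, mul x (inv x) = one

def IAMeadow.numeral {M : Type*} (A : IAMeadow M) : ℕ → M
  | 0 => A.one
  | 1 => A.one
  | n + 2 => A.add (A.numeral (n + 1)) A.one

inductive CTerm : Type
  | one : CTerm
  | add : CTerm → CTerm → CTerm
  | mul : CTerm → CTerm → CTerm
  | inv : CTerm → CTerm

def CTerm.eval {M : Type*} (A : IAMeadow M) : CTerm → M
  | .one => A.one
  | .add s t => A.add (s.eval A) (t.eval A)
  | .mul s t => A.mul (s.eval A) (t.eval A)
  | .inv t => A.inv (t.eval A)

section Aux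
variable {M : Type*} (A : IAMeadow M)

local instance : Std.Associative A.mul := ⟨A.mul_assoc⟩
local instance : Std.Commutative A.mul := ⟨A.mul_comm⟩
local instance : Std.Associative A.add := ⟨A.add_assoc⟩
local instance : Std.Commutative A.add := ⟨A.add_comm⟩

theorem IAMeadow.one_mul (x : M) : A.mul A.one x = x := by
  rw [A.mul_comm]; exact A.mul_one x

theorem IAMeadow.numeral_succ (n : ℕ) (hn : 0 < n) :
    A.numeral (n + 1) = A.add (A.numeral n) A.one := by
  obtain ⟨k, rfl⟩ := Nat.exists_eq_add_of_lt hn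
  simp [IAMeadow.numeral]

theorem IAMeadow.numeral_add (n m : ℕ) (hn : 0 < n) (hm : 0 < m) :
    A.numeral (n + m) = A.add (A.numeral n) (A.numeral m) := by
  induction m with
  | zero => omega
  | succ m ih =>
    rcases Nat.eq_zero_or_pos m with rfl | hm'
    · rw [A.numeral_succ n hn]; rfl
    · rw [← Nat.add_assoc, A.numeral_succ (n + m) (by omega), ih hm',
        A.numeral_succ m hm', A.add_assoc]

theorem IAMeadow.numeral_mul (n m : ℕ) (hn : 0 < n) (hm : 0 < m) :
    A.numeral (n * m) = A.mul (A.numeral n) (A.numeral m) := by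
  induction m with
  | zero => omega
  | succ m ih =>
    rcases Nat.eq_zero_or_pos m with rfl | hm'
    · simp [IAMeadow.numeral, A.mul_one]
    · rw [Nat.mul_succ, A.numeral_add (n*m) n (by positivity) hn, ih hm',
        A.numeral_succ m hm', A.mul_add, A.mul_one]

theorem IAMeadow.cancel (a b c : M) :
    A.mul (A.mul c a) (A.inv (A.mul c b)) = A.mul a (A.inv b) := by
  calc A.mul (A.mul c a) (A.inv (A.mul c b))
      = A.mul (A.mul (A.mul c a) (A.inv (A.mul c b))) (A.mul b (A.inv b)) := by
        rw [A.mul_inv, A.mul_one]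
    _ = A.mul (A.mul (A.mul c b) (A.inv (A.mul c b))) (A.mul a (A.inv b)) := by ac_rfl
    _ = A.mul a (A.inv b) := by rw [A.mul_inv, A.one_mul]

theorem IAMeadow.inv_div (a b : M) :
    A.inv (A.mul a (A.inv b)) = A.mul b (A.inv a) := by
  calc A.inv (A.mul a (A.inv b))
      = A.mul (A.mul (A.inv (A.mul a (A.inv b))) (A.mul a (A.inv a))) (A.mul b (A.inv b)) := by
        rw [A.mul_inv a, A.mul_inv b, A.mul_one, A.mul_one]
    _ = A.mul (A.mul (A.mul a (A.inv b)) (A.inv (A.mul a (A.inv b)))) (A.mul b (A.inv a)) := by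
        ac_rfl
    _ = A.mul b (A.inv a) := by rw [A.mul_inv, A.one_mul]

theorem IAMeadow.mul_div_mul (a b c d : M) :
    A.mul (A.mul a (A.inv b)) (A.mul c (A.inv d)) =
      A.mul (A.mul a c) (A.inv (A.mul b d)) := by
  calc A.mul (A.mul a (A.inv b)) (A.mul c (A.inv d))
      = A.mul (A.mul (A.mul a (A.inv b)) (A.mul c (A.inv d)))
          (A.mul (A.mul b d) (A.inv (A.mul b d))) := by rw [A.mul_inv, A.mul_one]
    _ = A.mul (A.mul (A.mul b (A.inv b)) (A.mul d (A.inv d)))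
          (A.mul (A.mul a c) (A.inv (A.mul b d))) := by ac_rfl
    _ = A.mul (A.mul a c) (A.inv (A.mul b d)) := by
        rw [A.mul_inv b, A.mul_inv d, A.mul_one, A.one_mul]

theorem IAMeadow.add_div (a b c : M) :
    A.add (A.mul a (A.inv c)) (A.mul b (A.inv c)) = A.mul (A.add a b) (A.inv c) := by
  rw [A.mul_comm a, A.mul_comm b, ← A.mul_add, A.mul_comm]

end Aux

theorem reduce_frac (n m : ℕ) (hn : 0 < n) (hm : 0 < m) :
    ∃ n' m' : ℕ, 0 < n' ∧ 0 < m' ∧ Nat.gcd n' m' = 1 ∧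
      ∀ (M : Type) (A : IAMeadow M),
        A.mul (A.numeral n) (A.inv (A.numeral m)) =
          A.mul (A.numeral n') (A.inv (A.numeral m')) := by
  set g := Nat.gcd n m with hg
  have hgpos : 0 < g := Nat.gcd_pos_of_pos_left m hn
  have hn' : 0 < n / g := Nat.div_pos (Nat.le_of_dvd hn (Nat.gcd_dvd_left n m)) hgpos
  have hm' : 0 < m / g := Nat.div_pos (Nat.le_of_dvd hm (Nat.gcd_dvd_right n m)) hgpos
  refine ⟨n / g, m / g, hn', hm', Nat.coprime_div_gcd_div_gcd hgpos, fun M A => ?_⟩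
  have e1 : n = g * (n / g) := (Nat.mul_div_cancel' (Nat.gcd_dvd_left n m)).symm
  have e2 : m = g * (m / g) := (Nat.mul_div_cancel' (Nat.gcd_dvd_right n m)).symm
  conv_lhs => rw [e1, e2]
  rw [A.numeral_mul g (n / g) hgpos hn', A.numeral_mul g (m / g) hgpos hm',
    A.cancel]

theorem closed_term_normal_form (t : CTerm) :
    ∃ n m : ℕ, 0 < n ∧ 0 < m ∧ Nat.gcd n m = 1 ∧
      ∀ (M : Type) (A : IAMeadow M),
        t.eval A = A.mul (A.numeral n) (A.inv (A.numeral m)) := by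
  induction t with
  | one =>
    refine ⟨1, 1, one_pos, one_pos, rfl, fun M A => ?_⟩
    show A.one = A.mul (A.numeral 1) (A.inv (A.numeral 1))
    rw [show A.numeral 1 = A.one from rfl, A.mul_inv]
  | add s t ihs iht =>
    obtain ⟨n1, m1, hn1, hm1, -, h1⟩ := ihs
    obtain ⟨n2, m2, hn2, hm2, -, h2⟩ := iht
    obtain ⟨n', m', hn', hm', hcop, hred⟩ :=
      reduce_frac (n1 * m2 + n2 * m1) (m1 * m2) (by positivity) (by positivity)
    refine ⟨n', m', hn', hm', hcop, fun M A => ?_⟩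
    rw [← hred M A]
    show A.add (s.eval A) (t.eval A) = _
    rw [h1 M A, h2 M A,
      A.numeral_add (n1 * m2) (n2 * m1) (by positivity) (by positivity),
      A.numeral_mul n1 m2 hn1 hm2, A.numeral_mul n2 m1 hn2 hm1,
      A.numeral_mul m1 m2 hm1 hm2,
      ← A.add_div, ← A.cancel (A.numeral n1) (A.numeral m1) (A.numeral m2),
      ← A.cancel (A.numeral n2) (A.numeral m2) (A.numeral m1)]
    have c1 : A.mul (A.numeral m2) (A.numeral m1) = A.mul (A.numeral m1) (A.numeral m2) :=
      A.mul_comm _ _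
    rw [c1, A.mul_comm (A.numeral m2) (A.numeral n1), A.mul_comm (A.numeral m1) (A.numeral n2)]
  | mul s t ihs iht =>
    obtain ⟨n1, m1, hn1, hm1, -, h1⟩ := ihs
    obtain ⟨n2, m2, hn2, hm2, -, h2⟩ := iht
    obtain ⟨n', m', hn', hm', hcop, hred⟩ :=
      reduce_frac (n1 * n2) (m1 * m2) (by positivity) (by positivity)
    refine ⟨n', m', hn', hm', hcop, fun M A => ?_⟩
    rw [← hred M A]
    show A.mul (s.eval A) (t.eval A) = _
    rw [h1 M A, h2 M A, A.mul_div_mul,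
      A.numeral_mul n1 n2 hn1 hn2, A.numeral_mul m1 m2 hm1 hm2]
  | inv s ihs =>
    obtain ⟨n1, m1, hn1, hm1, hcop, h1⟩ := ihs
    refine ⟨m1, n1, hm1, hn1, Nat.gcd_comm m1 n1 ▸ hcop ▸ Nat.gcd_comm n1 m1 ▸ rfl, fun M A => ?_⟩
    show A.inv (s.eval A) = _
    rw [h1 M A, A.inv_div]
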